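/- arXiv:2201.05423 — 4 statements merged into one kernel-verified Lean document; each statement's English description precedes it below -/
import Mathlib

section
/- Let n, k be positive integers, let P be a constant symmetric n×n real matrix, and for each i = 1,…,k let A_i : ℝ × ℝᵏ → Matrix(n,n,ℝ) be a differentiable matrix-valued field and let C : ℝ × ℝᵏ → Matrix(n,n,ℝ) satisfy C(t,x) + C(t,x)ᵀ = 0 for all (t,x). Suppose U : ℝ × ℝᵏ → ℝⁿ is differentiable and satisfies pointwise the skew-symmetric system P ∂ₜU + Σᵢ ( ∂_{xᵢ}(A_i U) + A_iᵀ ∂_{xᵢ}U ) + C U = 0. Then the pointwise energy conservation law ∂ₜ(Uᵀ P U) + Σᵢ ∂_{xᵢ}( 2 Uᵀ A_i U ) = 0 holds at every (t,x). -/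
open Matrix

private lemma hasDerivAt_dot' {n : ℕ} {f g : ℝ → Fin n → ℝ} {f' g' : Fin n → ℝ} {s : ℝ}
    (hf : ∀ j, HasDerivAt (fun s => f s j) (f' j) s)
    (hg : ∀ j, HasDerivAt (fun s => g s j) (g' j) s) :
    HasDerivAt (fun s => f s ⬝ᵥ g s) (f' ⬝ᵥ g s + f s ⬝ᵥ g') s := by
  simp only [dotProduct]
  rw [← Finset.sum_add_distrib]
  exact HasDerivAt.fun_sum fun j _ => (hf j).mul (hg j)

private lemma dot_finsetSum' {n : ℕ} {ι : Type*} (s : Finset ι) (E : Fin n → ℝ)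
    (f : ι → Fin n → ℝ) : E ⬝ᵥ (∑ i ∈ s, f i) = ∑ i ∈ s, E ⬝ᵥ f i := by
  simp only [dotProduct, Finset.sum_apply, Finset.mul_sum]
  exact Finset.sum_comm

private lemma hasDerivAt_mulVec_const' {n : ℕ} (P : Matrix (Fin n) (Fin n) ℝ)
    {f : ℝ → Fin n → ℝ} {f' : Fin n → ℝ} {s : ℝ}
    (hf : ∀ j, HasDerivAt (fun s => f s j) (f' j) s) (j : Fin n) :
    HasDerivAt (fun s => P.mulVec (f s) j) (P.mulVec f' j) s := by
  simp only [mulVec, dotProduct]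
  exact HasDerivAt.fun_sum fun b _ => (hf b).const_mul (P j b)

/-- **Proposition 1 (energy conservation part), pointwise form.**
A skew-symmetric system `P Uₜ + Σᵢ ((Aᵢ U)_{xᵢ} + Aᵢᵀ U_{xᵢ}) + C U = 0` with `P` symmetric
constant and `C + Cᵀ = 0` satisfies the pointwise energy conservation law
`(Uᵀ P U)ₜ + Σᵢ (2 Uᵀ Aᵢ U)_{xᵢ} = 0`. -/
theorem stmt_0 (n k : ℕ) (hn : 0 < n) (hk : 0 < k)
    (P : Matrix (Fin n) (Fin n) ℝ) (hP : P.IsSymm)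
    (A : Fin k → ℝ → (Fin k → ℝ) → Matrix (Fin n) (Fin n) ℝ)
    (C : ℝ → (Fin k → ℝ) → Matrix (Fin n) (Fin n) ℝ)
    (hC : ∀ t x, C t x + (C t x)ᵀ = 0)
    (U : ℝ → (Fin k → ℝ) → Fin n → ℝ)
    (hU : Differentiable ℝ (fun q : ℝ × (Fin k → ℝ) => U q.1 q.2))
    (hA : ∀ i a b, Differentiable ℝ (fun q : ℝ × (Fin k → ℝ) => A i q.1 q.2 a b))
    (hPDE : ∀ t x,
      P.mulVec (deriv (fun s => U s x) t)
      + (∑ i : Fin k,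
          (deriv (fun s => (A i t (Function.update x i s)).mulVec
              (U t (Function.update x i s))) (x i)
           + (A i t x)ᵀ.mulVec (deriv (fun s => U t (Function.update x i s)) (x i))))
      + (C t x).mulVec (U t x) = 0) :
    ∀ t x,
      deriv (fun s => U s x ⬝ᵥ P.mulVec (U s x)) t
      + (∑ i : Fin k,
          deriv (fun s => 2 * (U t (Function.update x i s) ⬝ᵥ
            (A i t (Function.update x i s)).mulVec (U t (Function.update x i s)))) (x i))
      = 0 := by
  intro t x
  -- component differentiability of U
  have hUc : ∀ j, Differentiable ℝ (fun q : ℝ × (Fin k → ℝ) => U q.1 q.2 j) :=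
    fun j => differentiable_pi.mp hU j
  -- the time curve
  have hcurve1 : ∀ j, HasDerivAt (fun s : ℝ => U s x j)
      (deriv (fun s : ℝ => U s x j) t) t := fun j =>
    (((hUc j).comp (differentiable_id.prodMk (differentiable_const x))) t).hasDerivAt
  set V' : Fin n → ℝ := fun j => deriv (fun s : ℝ => U s x j) t with hV'
  have hVd : HasDerivAt (fun s : ℝ => U s x) V' t := hasDerivAt_pi.mpr hcurve1
  -- the update curves
  have hupd : ∀ i : Fin k, Differentiable ℝ (fun s : ℝ => Function.update x i s) := by
    intro i
    apply differentiable_pi.mpr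
    intro j
    by_cases h : j = i
    · subst h; simp only [Function.update_apply, if_pos rfl]; exact differentiable_id
    · simp only [Function.update_apply, if_neg h]; exact differentiable_const _
  have hWdiff : ∀ (i : Fin k) j,
      Differentiable ℝ (fun s : ℝ => U t (Function.update x i s) j) :=
    fun i j => (hUc j).comp ((differentiable_const t).prodMk (hupd i))
  have hWc : ∀ (i : Fin k) j, HasDerivAt (fun s : ℝ => U t (Function.update x i s) j)
      (deriv (fun s : ℝ => U t (Function.update x i s) j) (x i)) (x i) :=
    fun i j => ((hWdiff i j) (x i)).hasDerivAt
  set W' : Fin k → Fin n → ℝ :=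
    fun i j => deriv (fun s : ℝ => U t (Function.update x i s) j) (x i) with hW'
  have hWd : ∀ i : Fin k, HasDerivAt (fun s : ℝ => U t (Function.update x i s)) (W' i) (x i) :=
    fun i => hasDerivAt_pi.mpr (hWc i)
  -- entries of A along the update curves
  have hAdiff : ∀ (i : Fin k) a b,
      Differentiable ℝ (fun s : ℝ => A i t (Function.update x i s) a b) :=
    fun i a b => (hA i a b).comp ((differentiable_const t).prodMk (hupd i))
  -- F i s := (A i t (upd s)).mulVec (U t (upd s))
  have hFc : ∀ (i : Fin k) j, HasDerivAt
      (fun s : ℝ => ((A i t (Function.update x i s)).mulVec (U t (Function.update x i s))) j)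
      (deriv (fun s : ℝ =>
        ((A i t (Function.update x i s)).mulVec (U t (Function.update x i s))) j) (x i)) (x i) := by
    intro i j
    have hd : Differentiable ℝ (fun s : ℝ =>
        ((A i t (Function.update x i s)).mulVec (U t (Function.update x i s))) j) := by
      simp only [mulVec, dotProduct]
      exact Differentiable.fun_sum fun b _ => (hAdiff i j b).mul (hWdiff i b)
    exact (hd (x i)).hasDerivAt
  set D : Fin k → Fin n → ℝ := fun i j => deriv (fun s : ℝ =>
      ((A i t (Function.update x i s)).mulVec (U t (Function.update x i s))) j) (x i) with hD
  have hFd : ∀ i : Fin k, HasDerivAt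
      (fun s : ℝ => (A i t (Function.update x i s)).mulVec (U t (Function.update x i s)))
      (D i) (x i) := fun i => hasDerivAt_pi.mpr (hFc i)
  set E : Fin n → ℝ := U t x with hE
  -- rewrite the PDE using these derivatives
  have key := hPDE t x
  rw [hVd.deriv] at key
  have keysum : (∑ i : Fin k,
      (deriv (fun s => (A i t (Function.update x i s)).mulVec
          (U t (Function.update x i s))) (x i)
       + (A i t x)ᵀ.mulVec (deriv (fun s => U t (Function.update x i s)) (x i))))
      = ∑ i : Fin k, (D i + (A i t x)ᵀ.mulVec (W' i)) := by
    refine Finset.sum_congr rfl fun i _ => ?_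
    rw [(hFd i).deriv, (hWd i).deriv]
  rw [keysum] at key
  -- dot the PDE with E
  have key2 : E ⬝ᵥ P.mulVec V'
      + ∑ i : Fin k, (E ⬝ᵥ D i + E ⬝ᵥ (A i t x)ᵀ.mulVec (W' i))
      + E ⬝ᵥ (C t x).mulVec E = 0 := by
    have h := congrArg (fun v => E ⬝ᵥ v) key
    simp only [dotProduct_add, dotProduct_zero, dot_finsetSum', ← hE] at h
    simpa [dotProduct_add] using h
  -- skewness of C kills the last term
  have hCskew : E ⬝ᵥ (C t x).mulVec E = 0 := by
    have hCt : (C t x)ᵀ = -(C t x) := eq_neg_of_add_eq_zero_right (hC t x)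
    have h1 : E ⬝ᵥ (C t x).mulVec E = -(E ⬝ᵥ (C t x).mulVec E) := by
      conv_lhs => rw [dotProduct_mulVec, ← mulVec_transpose, hCt, neg_mulVec,
        neg_dotProduct, dotProduct_comm]
    linarith
  -- compute the derivative of the energy in time
  have hT1 : HasDerivAt (fun s : ℝ => U s x ⬝ᵥ P.mulVec (U s x))
      (V' ⬝ᵥ P.mulVec E + E ⬝ᵥ P.mulVec V') t :=
    hasDerivAt_dot' hcurve1 (fun j => hasDerivAt_mulVec_const' P hcurve1 j)
  rw [hT1.deriv]
  -- compute the derivative of each flux term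
  have hT2 : ∀ i : Fin k,
      deriv (fun s => 2 * (U t (Function.update x i s) ⬝ᵥ
        (A i t (Function.update x i s)).mulVec (U t (Function.update x i s)))) (x i)
      = 2 * (E ⬝ᵥ D i + E ⬝ᵥ (A i t x)ᵀ.mulVec (W' i)) := by
    intro i
    have h2 : HasDerivAt (fun s => 2 * (U t (Function.update x i s) ⬝ᵥ
        (A i t (Function.update x i s)).mulVec (U t (Function.update x i s))))
        (2 * (W' i ⬝ᵥ ((A i t (Function.update x i (x i))).mulVec
            (U t (Function.update x i (x i))))
          + U t (Function.update x i (x i)) ⬝ᵥ D i)) (x i) :=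
      (hasDerivAt_dot' (hWc i) (hFc i)).const_mul 2
    rw [h2.deriv]
    have hupdself : Function.update x i (x i) = x := Function.update_eq_self i x
    rw [hupdself]
    have hsw : W' i ⬝ᵥ (A i t x).mulVec E = E ⬝ᵥ (A i t x)ᵀ.mulVec (W' i) := by
      rw [dotProduct_mulVec (v := E), vecMul_transpose, dotProduct_comm]
    rw [← hE, hsw]
    ring
  rw [Finset.sum_congr rfl (fun i _ => hT2 i), ← Finset.mul_sum]
  -- symmetry of P
  have hPs : V' ⬝ᵥ P.mulVec E = E ⬝ᵥ P.mulVec V' := by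
    rw [dotProduct_mulVec, ← mulVec_transpose, hP.eq, dotProduct_comm]
  rw [hPs]
  linarith [key2, hCskew]
end

section
/- Fix real parameters γ, α with γ > 1 and α > 0, real constants ã₁₂, ã₁₄, and let P = diag(α², (γ−1)/2, (γ−1)/2, 1). For Φ = (φ₁,φ₂,φ₃,φ₄) ∈ ℝ⁴ with φ₁ ≠ 0 set u = φ₂/φ₁, v = φ₃/φ₁ and define the 4×4 matrices A(Φ) = (1/2)·[[u,1,0,0],[−u², 3u, 0, 4φ₄/φ₁],[−uv, v, 2u, 0],[−γu φ₄/φ₁, γ φ₄/φ₁, 0, 2u]] and Ã(Φ) = [[α²u, ã₁₂φ₂, 0, ã₁₄φ₄],[−2ã₁₂φ₂, ã₁₂φ₁ + ((γ−1)/2)u, 0, 0],[0, 0, ((γ−1)/2)u, 0],[−2ã₁₄φ₄, 2(γ−1)φ₄/φ₁, 0, ã₁₄φ₁ + (2−γ)u]]. Then for every differentiable function Φ : ℝ → ℝ⁴ with φ₁(x) ≠ 0 for all x, the identity (d/dx)( Ã(Φ(x)) Φ(x) ) + Ã(Φ(x))ᵀ Φ'(x) = 2 P A(Φ(x)) Φ'(x)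 holds for all x. -/
open Matrix

/-- The diagonal norm matrix `P = diag(α², (γ−1)/2, (γ−1)/2, 1)`. -/
noncomputable def normP (γ α : ℝ) : Matrix (Fin 4) (Fin 4) ℝ :=
  Matrix.diagonal ![α ^ 2, (γ - 1) / 2, (γ - 1) / 2, 1]

/-- The `x`-direction coefficient matrix `A(Φ)` of the transformed Euler equations. -/
noncomputable def matA (γ : ℝ) (φ : Fin 4 → ℝ) : Matrix (Fin 4) (Fin 4) ℝ :=
  let u := φ 1 / φ 0
  let v := φ 2 / φ 0
  let q := φ 3 / φ 0
  (1 / 2 : ℝ) • !![u, 1, 0, 0;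
                   -u ^ 2, 3 * u, 0, 4 * q;
                   -(u * v), v, 2 * u, 0;
                   -(γ * u * q), γ * q, 0, 2 * u]

/-- The derived matrix `Ã(Φ)` (with free parameters `ã₁₂, ã₁₄`). -/
noncomputable def matAtil (γ α a12 a14 : ℝ) (φ : Fin 4 → ℝ) : Matrix (Fin 4) (Fin 4) ℝ :=
  let u := φ 1 / φ 0
  let q := φ 3 / φ 0
  !![α ^ 2 * u, a12 * φ 1, 0, a14 * φ 3;
     -(2 * a12 * φ 1), a12 * φ 0 + (γ - 1) / 2 * u, 0, 0;
     0, 0, (γ - 1) / 2 * u, 0;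
     -(2 * a14 * φ 3), 2 * (γ - 1) * q, 0, a14 * φ 0 + (2 - γ) * u]

set_option maxHeartbeats 2000000 in
/-- **Task 3, x-direction:** the matrices `Ã(Φ)` and `P` solve the system of ODE relations
`(Ã Φ)ₓ + Ãᵀ Φₓ = 2 P A Φₓ` along any differentiable curve `Φ` with `φ₁ ≠ 0`. -/
theorem stmt_4 (γ α a12 a14 : ℝ) (hγ : 1 < γ) (hα : 0 < α)
    (Φ : ℝ → Fin 4 → ℝ) (hΦ : Differentiable ℝ Φ) (hφ1 : ∀ x, Φ x 0 ≠ 0) :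
    ∀ x, deriv (fun s => (matAtil γ α a12 a14 (Φ s)).mulVec (Φ s)) x
        + (matAtil γ α a12 a14 (Φ x))ᵀ.mulVec (deriv Φ x)
      = (2 : ℝ) • ((normP γ α * matA γ (Φ x)).mulVec (deriv Φ x)) := by
  intro x
  have hd : HasDerivAt Φ (deriv Φ x) x := (hΦ x).hasDerivAt
  have hc : ∀ i, HasDerivAt (fun s => Φ s i) (deriv Φ x i) x :=
    fun i => hasDerivAt_pi.mp hd i
  have h0 := hc 0
  have h1 := hc 1
  have h2 := hc 2
  have h3 := hc 3
  have hne : Φ x 0 ≠ 0 := hφ1 x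
  have hFeq : (fun s => (matAtil γ α a12 a14 (Φ s)).mulVec (Φ s))
      = fun s => ![α ^ 2 * Φ s 1 + a12 * Φ s 1 ^ 2 + a14 * Φ s 3 ^ 2,
                   -(a12 * (Φ s 0 * Φ s 1)) + (γ - 1) / 2 * (Φ s 1 ^ 2 / Φ s 0),
                   (γ - 1) / 2 * (Φ s 1 * Φ s 2 / Φ s 0),
                   -(a14 * (Φ s 0 * Φ s 3)) + γ * (Φ s 1 * Φ s 3 / Φ s 0)] := by
    funext s i
    have hs := hφ1 s
    fin_cases i <;>
      simp [matAtil, Matrix.mulVec, dotProduct, Fin.sum_univ_four] <;>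
      field_simp <;> ring
  rw [hFeq]
  set p0 := Φ x 0
  set p1 := Φ x 1
  set p2 := Φ x 2
  set p3 := Φ x 3
  set d0 := deriv Φ x 0
  set d1 := deriv Φ x 1
  set d2 := deriv Φ x 2
  set d3 := deriv Φ x 3
  have c0 : HasDerivAt (fun s => α ^ 2 * Φ s 1 + a12 * Φ s 1 ^ 2 + a14 * Φ s 3 ^ 2)
      (α ^ 2 * d1 + a12 * ((2 : ℕ) * p1 ^ 1 * d1) + a14 * ((2 : ℕ) * p3 ^ 1 * d3)) x :=
    ((h1.const_mul (α ^ 2)).add ((h1.pow 2).const_mul a12)).add ((h3.pow 2).const_mul a14)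
  have c1 : HasDerivAt (fun s => -(a12 * (Φ s 0 * Φ s 1)) + (γ - 1) / 2 * (Φ s 1 ^ 2 / Φ s 0))
      (-(a12 * (d0 * p1 + p0 * d1)) + (γ - 1) / 2 * (((2 : ℕ) * p1 ^ 1 * d1 * p0 - p1 ^ 2 * d0) / p0 ^ 2)) x :=
    ((h0.mul h1).const_mul a12).neg.add (((h1.pow 2).div h0 hne).const_mul ((γ - 1) / 2))
  have c2 : HasDerivAt (fun s => (γ - 1) / 2 * (Φ s 1 * Φ s 2 / Φ s 0))
      ((γ - 1) / 2 * (((d1 * p2 + p1 * d2) * p0 - p1 * p2 * d0) / p0 ^ 2)) x :=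
    ((h1.mul h2).div h0 hne).const_mul ((γ - 1) / 2)
  have c3 : HasDerivAt (fun s => -(a14 * (Φ s 0 * Φ s 3)) + γ * (Φ s 1 * Φ s 3 / Φ s 0))
      (-(a14 * (d0 * p3 + p0 * d3)) + γ * (((d1 * p3 + p1 * d3) * p0 - p1 * p3 * d0) / p0 ^ 2)) x :=
    ((h0.mul h3).const_mul a14).neg.add (((h1.mul h3).div h0 hne).const_mul γ)
  have hG : HasDerivAt (fun s => ![α ^ 2 * Φ s 1 + a12 * Φ s 1 ^ 2 + a14 * Φ s 3 ^ 2,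
                   -(a12 * (Φ s 0 * Φ s 1)) + (γ - 1) / 2 * (Φ s 1 ^ 2 / Φ s 0),
                   (γ - 1) / 2 * (Φ s 1 * Φ s 2 / Φ s 0),
                   -(a14 * (Φ s 0 * Φ s 3)) + γ * (Φ s 1 * Φ s 3 / Φ s 0)])
      (![α ^ 2 * d1 + a12 * ((2 : ℕ) * p1 ^ 1 * d1) + a14 * ((2 : ℕ) * p3 ^ 1 * d3),
         -(a12 * (d0 * p1 + p0 * d1)) + (γ - 1) / 2 * (((2 : ℕ) * p1 ^ 1 * d1 * p0 - p1 ^ 2 * d0) / p0 ^ 2),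
         (γ - 1) / 2 * (((d1 * p2 + p1 * d2) * p0 - p1 * p2 * d0) / p0 ^ 2),
         -(a14 * (d0 * p3 + p0 * d3)) + γ * (((d1 * p3 + p1 * d3) * p0 - p1 * p3 * d0) / p0 ^ 2)]) x := by
    rw [hasDerivAt_pi]
    intro i
    fin_cases i
    · exact c0
    · exact c1
    · exact c2
    · exact c3
  rw [hG.deriv]
  have hT : (matAtil γ α a12 a14 (Φ x))ᵀ.mulVec (deriv Φ x)
      = ![α ^ 2 * (p1 / p0) * d0 - 2 * a12 * p1 * d1 - 2 * a14 * p3 * d3,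
          a12 * p1 * d0 + (a12 * p0 + (γ - 1) / 2 * (p1 / p0)) * d1 + 2 * (γ - 1) * (p3 / p0) * d3,
          (γ - 1) / 2 * (p1 / p0) * d2,
          a14 * p3 * d0 + (a14 * p0 + (2 - γ) * (p1 / p0)) * d3] := by
    funext i
    fin_cases i <;>
      simp [matAtil, Matrix.mulVec, dotProduct, Matrix.transpose_apply,
        Fin.sum_univ_four] <;> ring
  have hR : (2 : ℝ) • ((normP γ α * matA γ (Φ x)).mulVec (deriv Φ x))
      = ![α ^ 2 * ((p1 / p0) * d0 + d1),
          (γ - 1) / 2 * (-((p1 / p0) ^ 2) * d0 + 3 * (p1 / p0) * d1 + 4 * (p3 / p0) * d3),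
          (γ - 1) / 2 * (-((p1 / p0) * (p2 / p0)) * d0 + (p2 / p0) * d1 + 2 * (p1 / p0) * d2),
          -(γ * (p1 / p0) * (p3 / p0)) * d0 + γ * (p3 / p0) * d1 + 2 * (p1 / p0) * d3] := by
    funext i
    fin_cases i <;>
      simp [matA, normP, Matrix.mulVec, dotProduct, Matrix.mul_apply,
        Matrix.diagonal, Fin.sum_univ_four] <;> ring
  rw [hT, hR]
  funext i
  fin_cases i <;>
    simp only [Pi.add_apply, Matrix.cons_val_zero, Matrix.cons_val_one, Matrix.head_cons,
      Matrix.cons_val_two, Matrix.tail_cons, Matrix.cons_val_three, Fin.reduceFinMk, Fin.isValue] <;>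
    field_simp <;> ring
end

section
/- Fix real parameters γ, α with γ > 1 and α > 0 and let P = diag(α², (γ−1)/2, (γ−1)/2, 1). For Φ ∈ ℝ⁴ with φ₁ ≠ 0, let u = φ₂/φ₁, v = φ₃/φ₁, let A(Φ) = (1/2)·[[u,1,0,0],[−u², 3u, 0, 4φ₄/φ₁],[−uv, v, 2u, 0],[−γu φ₄/φ₁, γ φ₄/φ₁, 0, 2u]] and B(Φ) = (1/2)·[[v,0,1,0],[−uv, 2v, u, 0],[−v², 0, 3v, 4φ₄/φ₁],[−γv φ₄/φ₁, 0, γ φ₄/φ₁, 2v]], and let Ã(Φ) = [[α²u, 0, 0, 0],[0, ((γ−1)/2)u, 0, 0],[0, 0, ((γ−1)/2)u, 0],[0, 2(γ−1)φ₄/φ₁, 0, (2−γ)u]] and B̃(Φ) = [[α²v, 0, 0, 0],[0, ((γ−1)/2)v, 0, 0],[0, 0, ((γ−1)/2)v, 0],[0, 0, 2(γ−1)φ₄/φ₁, (2−γ)v]]. Suppose Φ : ℝ × ℝ² → ℝ⁴ is differentiable with φ₁(t,x,y) ≠ 0 everywhere and satisfies ∂ₜΦ + A(Φ) ∂ₓΦ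 + B(Φ) ∂ᵧΦ = 0 pointwise. Then the pointwise energy conservation law ∂ₜ( Φᵀ P Φ ) + ∂ₓ( Φᵀ Ã(Φ) Φ ) + ∂ᵧ( Φᵀ B̃(Φ) Φ ) = 0 holds at every (t,x,y). -/
open Matrix

/-- The `y`-direction coefficient matrix `B(Φ)` of the transformed Euler equations. -/
noncomputable def matB (γ : ℝ) (φ : Fin 4 → ℝ) : Matrix (Fin 4) (Fin 4) ℝ :=
  let u := φ 1 / φ 0
  let v := φ 2 / φ 0
  let q := φ 3 / φ 0
  (1 / 2 : ℝ) • !![v, 0, 1, 0;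
                   -(u * v), 2 * v, u, 0;
                   -v ^ 2, 0, 3 * v, 4 * q;
                   -(γ * v * q), 0, γ * q, 2 * v]

/-- The derived matrix `Ã(Φ)` with free parameters set to zero. -/
noncomputable def matAtil0 (γ α : ℝ) (φ : Fin 4 → ℝ) : Matrix (Fin 4) (Fin 4) ℝ :=
  let u := φ 1 / φ 0
  let q := φ 3 / φ 0
  !![α ^ 2 * u, 0, 0, 0;
     0, (γ - 1) / 2 * u, 0, 0;
     0, 0, (γ - 1) / 2 * u, 0;
     0, 2 * (γ - 1) * q, 0, (2 - γ) * u]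

/-- The derived matrix `B̃(Φ)` with free parameters set to zero. -/
noncomputable def matBtil0 (γ α : ℝ) (φ : Fin 4 → ℝ) : Matrix (Fin 4) (Fin 4) ℝ :=
  let v := φ 2 / φ 0
  let q := φ 3 / φ 0
  !![α ^ 2 * v, 0, 0, 0;
     0, (γ - 1) / 2 * v, 0, 0;
     0, 0, (γ - 1) / 2 * v, 0;
     0, 0, 2 * (γ - 1) * q, (2 - γ) * v]

set_option maxHeartbeats 2000000 in
/-- **Pointwise energy conservation for the transformed compressible Euler equations:**
a differentiable solution of `Φₜ + A(Φ)Φₓ + B(Φ)Φ_y = 0` with `φ₁ ≠ 0` satisfies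
`(Φᵀ P Φ)ₜ + (Φᵀ Ã(Φ) Φ)ₓ + (Φᵀ B̃(Φ) Φ)_y = 0`. -/
theorem stmt_6 (γ α : ℝ) (hγ : 1 < γ) (hα : 0 < α)
    (Φ : ℝ → ℝ → ℝ → Fin 4 → ℝ)
    (hΦ : Differentiable ℝ (fun q : ℝ × ℝ × ℝ => Φ q.1 q.2.1 q.2.2))
    (hφ1 : ∀ t x y, Φ t x y 0 ≠ 0)
    (hPDE : ∀ t x y,
      deriv (fun s => Φ s x y) t
      + (matA γ (Φ t x y)).mulVec (deriv (fun s => Φ t s y) x)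
      + (matB γ (Φ t x y)).mulVec (deriv (fun s => Φ t x s) y) = 0) :
    ∀ t x y,
      deriv (fun s => Φ s x y ⬝ᵥ (normP γ α).mulVec (Φ s x y)) t
      + deriv (fun s => Φ t s y ⬝ᵥ (matAtil0 γ α (Φ t s y)).mulVec (Φ t s y)) x
      + deriv (fun s => Φ t x s ⬝ᵥ (matBtil0 γ α (Φ t x s)).mulVec (Φ t x s)) y = 0 := by
  intro t x y
  have hne := hφ1 t x y
  -- differentiability of the three slices
  have hdt : Differentiable ℝ (fun s : ℝ => Φ s x y) :=
    hΦ.comp (differentiable_id.prodMk (differentiable_const (x, y)))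
  have hdx : Differentiable ℝ (fun s : ℝ => Φ t s y) :=
    hΦ.comp ((differentiable_const t).prodMk (differentiable_id.prodMk (differentiable_const y)))
  have hdy : Differentiable ℝ (fun s : ℝ => Φ t x s) :=
    hΦ.comp ((differentiable_const t).prodMk ((differentiable_const x).prodMk differentiable_id))
  set a := deriv (fun s => Φ s x y) t with ha_def
  set b := deriv (fun s => Φ t s y) x with hb_def
  set c := deriv (fun s => Φ t x s) y with hc_def
  have ha : ∀ i, HasDerivAt (fun s => Φ s x y i) (a i) t :=
    fun i => hasDerivAt_pi.mp (hdt t).hasDerivAt i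
  have hb : ∀ i, HasDerivAt (fun s => Φ t s y i) (b i) x :=
    fun i => hasDerivAt_pi.mp (hdx x).hasDerivAt i
  have hc : ∀ i, HasDerivAt (fun s => Φ t x s i) (c i) y :=
    fun i => hasDerivAt_pi.mp (hdy y).hasDerivAt i
  -- PDE componentwise
  have hpde := hPDE t x y
  have hp : ∀ i, a i
      + (matA γ (Φ t x y)).mulVec b i + (matB γ (Φ t x y)).mulVec c i = 0 := by
    intro i
    have := congrFun hpde i
    simpa using this
  have ea : ∀ i, a i
      = -((matA γ (Φ t x y)).mulVec b i) - (matB γ (Φ t x y)).mulVec c i := by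
    intro i
    have := hp i
    linarith
  -- energy function rewrite
  have hEfun : (fun s => Φ s x y ⬝ᵥ (normP γ α).mulVec (Φ s x y))
      = (fun s => α ^ 2 * (Φ s x y 0) ^ 2 + (γ - 1) / 2 * (Φ s x y 1) ^ 2
          + (γ - 1) / 2 * (Φ s x y 2) ^ 2 + (Φ s x y 3) ^ 2) := by
    funext s
    simp [normP, dotProduct, Matrix.mulVec, Matrix.diagonal, Fin.sum_univ_four]
    ring
  have hE : HasDerivAt (fun s => α ^ 2 * (Φ s x y 0) ^ 2 + (γ - 1) / 2 * (Φ s x y 1) ^ 2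
          + (γ - 1) / 2 * (Φ s x y 2) ^ 2 + (Φ s x y 3) ^ 2)
      (α ^ 2 * (2 * Φ t x y 0 ^ 1 * a 0) + (γ - 1) / 2 * (2 * Φ t x y 1 ^ 1 * a 1)
        + (γ - 1) / 2 * (2 * Φ t x y 2 ^ 1 * a 2) + 2 * Φ t x y 3 ^ 1 * a 3) t := by
    exact ((((((ha 0).pow 2).const_mul _).add (((ha 1).pow 2).const_mul _)).add
      (((ha 2).pow 2).const_mul _)).add (((ha 3).pow 2)))
  -- x-flux function rewrite
  have hFfun : (fun s => Φ t s y ⬝ᵥ (matAtil0 γ α (Φ t s y)).mulVec (Φ t s y))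
      = (fun s => α ^ 2 * (Φ t s y 0 * Φ t s y 1)
          + (γ - 1) / 2 * ((Φ t s y 1) ^ 3 + Φ t s y 1 * (Φ t s y 2) ^ 2) / Φ t s y 0
          + γ * (Φ t s y 1 * (Φ t s y 3) ^ 2) / Φ t s y 0) := by
    funext s
    have h0 := hφ1 t s y
    simp [matAtil0, dotProduct, Matrix.mulVec, Fin.sum_univ_four, Matrix.vecHead, Matrix.vecTail]
    field_simp
    ring
  have hF : HasDerivAt (fun s => α ^ 2 * (Φ t s y 0 * Φ t s y 1)
          + (γ - 1) / 2 * ((Φ t s y 1) ^ 3 + Φ t s y 1 * (Φ t s y 2) ^ 2) / Φ t s y 0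
          + γ * (Φ t s y 1 * (Φ t s y 3) ^ 2) / Φ t s y 0) _ x := ((((hb 0).mul (hb 1)).const_mul (α ^ 2)).add
      (((((hb 1).pow 3).add ((hb 1).mul ((hb 2).pow 2))).const_mul ((γ - 1) / 2)).div
        (hb 0) hne)).add
      ((((hb 1).mul ((hb 3).pow 2)).const_mul γ).div (hb 0) hne)
  -- y-flux function rewrite
  have hGfun : (fun s => Φ t x s ⬝ᵥ (matBtil0 γ α (Φ t x s)).mulVec (Φ t x s))
      = (fun s => α ^ 2 * (Φ t x s 0 * Φ t x s 2)
          + (γ - 1) / 2 * (Φ t x s 2 * (Φ t x s 1) ^ 2 + (Φ t x s 2) ^ 3) / Φ t x s 0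
          + γ * (Φ t x s 2 * (Φ t x s 3) ^ 2) / Φ t x s 0) := by
    funext s
    have h0 := hφ1 t x s
    simp [matBtil0, dotProduct, Matrix.mulVec, Fin.sum_univ_four, Matrix.vecHead, Matrix.vecTail]
    field_simp
    ring
  have hG : HasDerivAt (fun s => α ^ 2 * (Φ t x s 0 * Φ t x s 2)
          + (γ - 1) / 2 * (Φ t x s 2 * (Φ t x s 1) ^ 2 + (Φ t x s 2) ^ 3) / Φ t x s 0
          + γ * (Φ t x s 2 * (Φ t x s 3) ^ 2) / Φ t x s 0) _ y := ((((hc 0).mul (hc 2)).const_mul (α ^ 2)).add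
      (((((hc 2).mul ((hc 1).pow 2)).add ((hc 2).pow 3)).const_mul ((γ - 1) / 2)).div
        (hc 0) hne)).add
      ((((hc 2).mul ((hc 3).pow 2)).const_mul γ).div (hc 0) hne)
  rw [hEfun, hFfun, hGfun, hE.deriv, hF.deriv, hG.deriv]
  rw [ea 0, ea 1, ea 2, ea 3]
  simp only [matA, matB, Matrix.mulVec, dotProduct, Fin.sum_univ_four,
    Matrix.smul_apply, Matrix.cons_val', Matrix.cons_val_zero, Matrix.cons_val_one,
    Matrix.head_cons, Matrix.empty_val', Matrix.cons_val_fin_one, Matrix.head_fin_const,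
    Matrix.cons_val_two, Matrix.cons_val_three, Matrix.tail_cons, smul_eq_mul,
    Matrix.vecHead, Matrix.vecTail, Function.comp_apply, Fin.succ_zero_eq_one,
    Fin.succ_one_eq_two, Pi.zero_apply, Matrix.cons_val]
  norm_num [Matrix.vecHead, Matrix.vecTail, Matrix.cons_val]
  simp only [Fin.isValue, Matrix.cons_val]
  field_simp
  ring
end

section
/- Let N be a positive integer. Let P, P̃, Q, B be constant N×N real matrices with P symmetric, P̃ symmetric and invertible, P P̃ = P̃ P, P Q = Q P, and Q + Qᵀ = B; set D = P̃⁻¹ Q and assume P D = D P. Let Ã : ℝ → Matrix(N,N,ℝ) be a continuous matrix-valued function with P̃ Ã(t) = Ã(t) P̃ for all t, and define A₁(t) = P⁻¹ Ã(t)/2 and A₂(t) = P⁻¹ Ã(t)ᵀ/2 (P assumed invertible). Suppose Φ : ℝ → ℝᴺ is differentiable and satisfies the semi-discrete scheme Φ'(t) + D ( A₁(t) Φ(t) ) + A₂(t) D Φ(t) = 0 for all t. Then for all t, (d/dt)( Φ(t)ᵀ P P̃ Φ(t) ) + Φ(t)ᵀ B Ã(t) Φ(t) = 0; i.e. the discrete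 energy ‖Φ‖²_{P P̃} only changes through the boundary term Φᵀ B Ã Φ, so the scheme is energy conserving. -/
open Matrix

private lemma sbp_aux_dot {n : ℕ} (C : Matrix (Fin n) (Fin n) ℝ) (v w : Fin n → ℝ) :
    (C *ᵥ v) ⬝ᵥ w = v ⬝ᵥ (Cᵀ *ᵥ w) := by
  rw [dotProduct_mulVec, vecMul_transpose]

private lemma sbp_aux_sym {n : ℕ} (C : Matrix (Fin n) (Fin n) ℝ) (v : Fin n → ℝ) :
    v ⬝ᵥ C *ᵥ v = v ⬝ᵥ Cᵀ *ᵥ v := by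
  rw [← sbp_aux_dot, dotProduct_comm]

/-- **Semi-discrete energy conservation for the SBP scheme:** with SBP operator `D = P̃⁻¹Q`,
`Q + Qᵀ = B`, norm matrix `P` commuting with the discretisation, coefficient matrices
`A₁ = P⁻¹Ã/2`, `A₂ = P⁻¹Ãᵀ/2`, a solution of `Φ' + D(A₁Φ) + A₂DΦ = 0` satisfies
`(d/dt)(Φᵀ P P̃ Φ) + Φᵀ B Ã Φ = 0`, i.e. the discrete energy only changes through the
boundary term. -/
theorem stmt_16 (N : ℕ) (hN : 0 < N)
    (P Pt Q B : Matrix (Fin N) (Fin N) ℝ)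
    (hPsymm : P.IsSymm) (hPinv : IsUnit P.det)
    (hPtsymm : Pt.IsSymm) (hPtinv : IsUnit Pt.det)
    (hPPt : P * Pt = Pt * P) (hPQ : P * Q = Q * P)
    (hQB : Q + Qᵀ = B)
    (hPD : P * (Pt⁻¹ * Q) = (Pt⁻¹ * Q) * P)
    (At : ℝ → Matrix (Fin N) (Fin N) ℝ)
    (hAtcont : ∀ a b, Continuous fun t => At t a b)
    (hAtPt : ∀ t, Pt * At t = At t * Pt)
    (Φ : ℝ → Fin N → ℝ) (hΦ : Differentiable ℝ Φ)
    (hscheme : ∀ t,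
      deriv Φ t
      + (Pt⁻¹ * Q).mulVec (((2 : ℝ)⁻¹ • (P⁻¹ * At t)).mulVec (Φ t))
      + ((2 : ℝ)⁻¹ • (P⁻¹ * (At t)ᵀ)).mulVec ((Pt⁻¹ * Q).mulVec (Φ t)) = 0) :
    ∀ t, deriv (fun s => Φ s ⬝ᵥ (P * Pt).mulVec (Φ s)) t
      + Φ t ⬝ᵥ (B * At t).mulVec (Φ t) = 0 := by
  intro t
  -- basic invertibility facts
  have hPt1 : Pt * Pt⁻¹ = 1 := mul_nonsing_inv _ hPtinv
  have hP1 : P * P⁻¹ = 1 := mul_nonsing_inv _ hPinv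
  have hP1' : P⁻¹ * P = 1 := nonsing_inv_mul _ hPinv
  -- P⁻¹ commutes with Pt
  have hPinvPt : Pt * P⁻¹ = P⁻¹ * Pt := by
    calc Pt * P⁻¹ = P⁻¹ * P * (Pt * P⁻¹) := by rw [hP1', one_mul]
    _ = P⁻¹ * (P * Pt) * P⁻¹ := by rw [mul_assoc, mul_assoc, mul_assoc]
    _ = P⁻¹ * (Pt * P) * P⁻¹ := by rw [hPPt]
    _ = P⁻¹ * Pt * (P * P⁻¹) := by rw [mul_assoc, mul_assoc, mul_assoc]
    _ = P⁻¹ * Pt := by rw [hP1, mul_one]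
  -- (At t)ᵀ commutes with Pt
  have hAT : Pt * (At t)ᵀ = (At t)ᵀ * Pt := by
    have h := congrArg Matrix.transpose (hAtPt t)
    rw [transpose_mul, transpose_mul, hPtsymm.eq] at h
    exact h.symm
  -- P*Pt symmetric
  have hMsymm : (P * Pt)ᵀ = P * Pt := by
    rw [transpose_mul, hPsymm.eq, hPtsymm.eq, hPPt]
  -- key matrix identity 1
  have h1 : (P * Pt) * ((Pt⁻¹ * Q) * ((2 : ℝ)⁻¹ • (P⁻¹ * At t)))
      = (2 : ℝ)⁻¹ • (Q * At t) := by
    rw [mul_smul_comm, mul_smul_comm]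
    congr 1
    calc (P * Pt) * ((Pt⁻¹ * Q) * (P⁻¹ * At t))
        = P * (Pt * (Pt⁻¹ * (Q * (P⁻¹ * At t)))) := by
          simp only [Matrix.mul_assoc]
      _ = P * Q * (P⁻¹ * At t) := by
          rw [← Matrix.mul_assoc Pt, hPt1, one_mul, ← Matrix.mul_assoc]
      _ = Q * ((P * P⁻¹) * At t) := by rw [hPQ]; simp only [Matrix.mul_assoc]
      _ = Q * At t := by rw [hP1, one_mul]
  -- key matrix identity 2
  have h2 : (P * Pt) * (((2 : ℝ)⁻¹ • (P⁻¹ * (At t)ᵀ)) * (Pt⁻¹ * Q))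
      = (2 : ℝ)⁻¹ • ((At t)ᵀ * Q) := by
    rw [smul_mul_assoc, mul_smul_comm]
    congr 1
    calc (P * Pt) * ((P⁻¹ * (At t)ᵀ) * (Pt⁻¹ * Q))
        = P * ((Pt * P⁻¹) * ((At t)ᵀ * (Pt⁻¹ * Q))) := by
          simp only [Matrix.mul_assoc]
      _ = (P * P⁻¹) * (Pt * ((At t)ᵀ * (Pt⁻¹ * Q))) := by
          rw [hPinvPt]; simp only [Matrix.mul_assoc]
      _ = Pt * (At t)ᵀ * (Pt⁻¹ * Q) := by rw [hP1, one_mul, ← Matrix.mul_assoc]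
      _ = (At t)ᵀ * (Pt * Pt⁻¹) * Q := by rw [hAT]; simp only [Matrix.mul_assoc]
      _ = (At t)ᵀ * Q := by rw [hPt1, mul_one]
  -- transposed identities
  have h3 : ((Pt⁻¹ * Q) * ((2 : ℝ)⁻¹ • (P⁻¹ * At t)))ᵀ * (P * Pt)
      = (2 : ℝ)⁻¹ • ((At t)ᵀ * Qᵀ) := by
    calc ((Pt⁻¹ * Q) * ((2 : ℝ)⁻¹ • (P⁻¹ * At t)))ᵀ * (P * Pt)
        = ((Pt⁻¹ * Q) * ((2 : ℝ)⁻¹ • (P⁻¹ * At t)))ᵀ * (P * Pt)ᵀ := by rw [hMsymm]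
      _ = ((P * Pt) * ((Pt⁻¹ * Q) * ((2 : ℝ)⁻¹ • (P⁻¹ * At t))))ᵀ :=
          (transpose_mul (P * Pt) ((Pt⁻¹ * Q) * ((2 : ℝ)⁻¹ • (P⁻¹ * At t)))).symm
      _ = ((2 : ℝ)⁻¹ • (Q * At t))ᵀ := by rw [h1]
      _ = (2 : ℝ)⁻¹ • ((At t)ᵀ * Qᵀ) := by rw [transpose_smul, transpose_mul]
  have h4 : (((2 : ℝ)⁻¹ • (P⁻¹ * (At t)ᵀ)) * (Pt⁻¹ * Q))ᵀ * (P * Pt)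
      = (2 : ℝ)⁻¹ • (Qᵀ * At t) := by
    calc (((2 : ℝ)⁻¹ • (P⁻¹ * (At t)ᵀ)) * (Pt⁻¹ * Q))ᵀ * (P * Pt)
        = (((2 : ℝ)⁻¹ • (P⁻¹ * (At t)ᵀ)) * (Pt⁻¹ * Q))ᵀ * (P * Pt)ᵀ := by rw [hMsymm]
      _ = ((P * Pt) * (((2 : ℝ)⁻¹ • (P⁻¹ * (At t)ᵀ)) * (Pt⁻¹ * Q)))ᵀ :=
          (transpose_mul (P * Pt) (((2 : ℝ)⁻¹ • (P⁻¹ * (At t)ᵀ)) * (Pt⁻¹ * Q))).symm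
      _ = ((2 : ℝ)⁻¹ • ((At t)ᵀ * Q))ᵀ := by rw [h2]
      _ = (2 : ℝ)⁻¹ • (Qᵀ * At t) := by
          rw [transpose_smul, transpose_mul, transpose_transpose]
  -- derivative of the energy
  have hΦd : HasDerivAt Φ (deriv Φ t) t := (hΦ t).hasDerivAt
  have hcomp : ∀ i, HasDerivAt (fun s => Φ s i) (deriv Φ t i) t :=
    hasDerivAt_pi.mp hΦd
  have hsum : HasDerivAt (fun s => ∑ i, ∑ j, Φ s i * ((P * Pt) i j * Φ s j))
      (∑ i, ∑ j, (deriv Φ t i * ((P * Pt) i j * Φ t j)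
        + Φ t i * ((P * Pt) i j * deriv Φ t j))) t := by
    refine HasDerivAt.fun_sum fun i _ => HasDerivAt.fun_sum fun j _ => ?_
    exact (hcomp i).mul ((hcomp j).const_mul ((P * Pt) i j))
  have hfun : (fun s => Φ s ⬝ᵥ (P * Pt) *ᵥ Φ s)
      = fun s => ∑ i, ∑ j, Φ s i * ((P * Pt) i j * Φ s j) := by
    funext s
    simp [dotProduct, Matrix.mulVec, Finset.mul_sum]
  have hderiv : deriv (fun s => Φ s ⬝ᵥ (P * Pt) *ᵥ Φ s) t
      = deriv Φ t ⬝ᵥ (P * Pt) *ᵥ Φ t + Φ t ⬝ᵥ (P * Pt) *ᵥ deriv Φ t := by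
    rw [hfun, hsum.deriv]
    simp [dotProduct, Matrix.mulVec, Finset.mul_sum, Finset.sum_add_distrib]
  -- the scheme
  have hv : deriv Φ t = -((Pt⁻¹ * Q) *ᵥ (((2 : ℝ)⁻¹ • (P⁻¹ * At t)) *ᵥ Φ t)
      + ((2 : ℝ)⁻¹ • (P⁻¹ * (At t)ᵀ)) *ᵥ ((Pt⁻¹ * Q) *ᵥ Φ t)) := by
    have h := hscheme t
    rw [add_assoc] at h
    exact eq_neg_of_add_eq_zero_left h
  rw [hderiv, hv]
  -- reduce each term to a quadratic form
  have e1 : ((Pt⁻¹ * Q) *ᵥ (((2 : ℝ)⁻¹ • (P⁻¹ * At t)) *ᵥ Φ t)) ⬝ᵥ ((P * Pt) *ᵥ Φ t)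
      = (2 : ℝ)⁻¹ * (Φ t ⬝ᵥ ((At t)ᵀ * Qᵀ) *ᵥ Φ t) := by
    rw [mulVec_mulVec, sbp_aux_dot, mulVec_mulVec, h3, smul_mulVec,
      dotProduct_smul, smul_eq_mul]
  have e2 : (((2 : ℝ)⁻¹ • (P⁻¹ * (At t)ᵀ)) *ᵥ ((Pt⁻¹ * Q) *ᵥ Φ t)) ⬝ᵥ ((P * Pt) *ᵥ Φ t)
      = (2 : ℝ)⁻¹ * (Φ t ⬝ᵥ (Qᵀ * At t) *ᵥ Φ t) := by
    rw [mulVec_mulVec, sbp_aux_dot, mulVec_mulVec, h4, smul_mulVec,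
      dotProduct_smul, smul_eq_mul]
  have e3 : Φ t ⬝ᵥ ((P * Pt) *ᵥ ((Pt⁻¹ * Q) *ᵥ (((2 : ℝ)⁻¹ • (P⁻¹ * At t)) *ᵥ Φ t)))
      = (2 : ℝ)⁻¹ * (Φ t ⬝ᵥ (Q * At t) *ᵥ Φ t) := by
    simp only [mulVec_mulVec]
    rw [h1, smul_mulVec, dotProduct_smul, smul_eq_mul]
  have e4 : Φ t ⬝ᵥ ((P * Pt) *ᵥ (((2 : ℝ)⁻¹ • (P⁻¹ * (At t)ᵀ)) *ᵥ ((Pt⁻¹ * Q) *ᵥ Φ t)))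
      = (2 : ℝ)⁻¹ * (Φ t ⬝ᵥ ((At t)ᵀ * Q) *ᵥ Φ t) := by
    simp only [mulVec_mulVec]
    rw [h2, smul_mulVec, dotProduct_smul, smul_eq_mul]
  -- symmetrisation of quadratic forms
  have s1 : Φ t ⬝ᵥ ((At t)ᵀ * Qᵀ) *ᵥ Φ t = Φ t ⬝ᵥ (Q * At t) *ᵥ Φ t := by
    rw [sbp_aux_sym, transpose_mul, transpose_transpose, transpose_transpose]
  have s2 : Φ t ⬝ᵥ ((At t)ᵀ * Q) *ᵥ Φ t = Φ t ⬝ᵥ (Qᵀ * At t) *ᵥ Φ t := by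
    rw [sbp_aux_sym, transpose_mul, transpose_transpose]
  have sB : Φ t ⬝ᵥ (Q * At t) *ᵥ Φ t + Φ t ⬝ᵥ (Qᵀ * At t) *ᵥ Φ t
      = Φ t ⬝ᵥ (B * At t) *ᵥ Φ t := by
    rw [← dotProduct_add, ← Matrix.add_mulVec, ← Matrix.add_mul, hQB]
  simp only [neg_dotProduct, mulVec_neg, dotProduct_neg, add_dotProduct,
    mulVec_add, dotProduct_add]
  rw [e1, e2, e3, e4, s1, s2]
  linarith [sB]
end
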